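/- Let I be a finite index set, ε > 0, Δ > 0, and a, b, t : I → ℝ with ∑_{i ∈ I} |a_i − b_i| ≤ Δ. Then ∏_{i ∈ I} exp(−(ε/Δ)|t_i − a_i|) ≤ exp(ε) · ∏_{i ∈ I} exp(−(ε/Δ)|t_i − b_i|). -/
import Mathlib

open Finset

/-- Key step of Propositions 3 and 6: if the total L1 distance between two
weight vectors is at most `Δ`, the ratio of the products of Laplace(`Δ/ε`)
densities centered at the respective weights is at most `exp ε`. -/
theorem laplace_product_ratio {I : Type*} [Fintype I]
    (ε Δ : ℝ) (hε : 0 < ε) (hΔ : 0 < Δ)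
    (a b t : I → ℝ) (hab : ∑ i, |a i - b i| ≤ Δ) :
    ∏ i, Real.exp (-(ε / Δ) * |t i - a i|)
      ≤ Real.exp ε * ∏ i, Real.exp (-(ε / Δ) * |t i - b i|) := by
  rw [← Real.exp_sum, ← Real.exp_sum, ← Real.exp_add, Real.exp_le_exp]
  have h1 : ∑ i, (-(ε / Δ) * |t i - a i|) - ∑ i, (-(ε / Δ) * |t i - b i|)
      = (ε / Δ) * ∑ i, (|t i - b i| - |t i - a i|) := by
    rw [← Finset.sum_sub_distrib, Finset.mul_sum]; apply Finset.sum_congr rfl; intros; ring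
  have h2 : ∑ i, (|t i - b i| - |t i - a i|) ≤ ∑ i, |a i - b i| := by
    apply Finset.sum_le_sum
    intro i _
    have := abs_sub_abs_le_abs_sub (t i - b i) (t i - a i)
    calc |t i - b i| - |t i - a i| ≤ |(t i - b i) - (t i - a i)| := this
      _ = |a i - b i| := by rw [show (t i - b i) - (t i - a i) = a i - b i by ring]
  have : (ε / Δ) * ∑ i, (|t i - b i| - |t i - a i|) ≤ (ε / Δ) * Δ := by
    apply mul_le_mul_of_nonneg_left (h2.trans hab) (by positivity)
  rw [div_mul_cancel₀ ε hΔ.ne'] at this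
  linarith [h1 ▸ this]
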